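/- The Malvenuto–Reutenauer product on k[S^∞] is associative, and the empty permutation (the unique element of S_0) is a two-sided unit for it. -/

import Mathlib

attribute [local instance] Classical.propDecidable

/-- `w` is a `(p, n-p)`-shuffle in `S_n`. -/
def IsShuffle (p : ℕ) {n : ℕ} (w : Equiv.Perm (Fin n)) : Prop :=
  ∀ a b : Fin n, a < b → ((b : ℕ) < p ∨ p ≤ (a : ℕ)) → w a < w b

/-- The block permutation `ρ × σ ∈ S_{p+q}`. -/
def blockPerm {p q : ℕ} (ρ : Equiv.Perm (Fin p)) (σ : Equiv.Perm (Fin q)) :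
    Equiv.Perm (Fin (p + q)) :=
  finSumFinEquiv.permCongr (Equiv.sumCongr ρ σ)

section Aux

open Equiv Finset

lemma strictMono_eq_of_range_eq {α : Type*} [LinearOrder α] {m : ℕ} {f g : Fin m → α}
    (hf : StrictMono f) (hg : StrictMono g)
    (h : Set.range f = Set.range g) : f = g := by
  haveI : WellFoundedLT (Fin m) := inferInstance
  exact (StrictMono.range_inj hf hg).mp h

lemma perm_eq_one_of_strictMono {n : ℕ} (w : Equiv.Perm (Fin n)) (h : StrictMono ⇑w) :
    w = 1 := by
  have : ⇑w = id := strictMono_eq_of_range_eq h strictMono_id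
    (by rw [Set.range_id, w.surjective.range_eq])
  exact Equiv.ext fun x => congrFun this x

lemma blockPerm_castAdd {p q : ℕ} (ρ : Equiv.Perm (Fin p)) (σ : Equiv.Perm (Fin q)) (i : Fin p) :
    blockPerm ρ σ (Fin.castAdd q i) = Fin.castAdd q (ρ i) := by
  simp [blockPerm, Equiv.permCongr_apply]

lemma blockPerm_natAdd {p q : ℕ} (ρ : Equiv.Perm (Fin p)) (σ : Equiv.Perm (Fin q)) (j : Fin q) :
    blockPerm ρ σ (Fin.natAdd p j) = Fin.natAdd p (σ j) := by
  simp [blockPerm, Equiv.permCongr_apply]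

lemma blockPerm_val_lt {p q : ℕ} (ρ : Equiv.Perm (Fin p)) (σ : Equiv.Perm (Fin q))
    (i : Fin (p + q)) (h : (i : ℕ) < p) :
    ((blockPerm ρ σ i : Fin (p + q)) : ℕ) = (ρ ⟨i, h⟩ : ℕ) := by
  induction i using Fin.addCases with
  | left i' => rw [blockPerm_castAdd]; simp
  | right j => simp at h

lemma blockPerm_val_ge {p q : ℕ} (ρ : Equiv.Perm (Fin p)) (σ : Equiv.Perm (Fin q))
    (i : Fin (p + q)) (h : p ≤ (i : ℕ)) :
    ((blockPerm ρ σ i : Fin (p + q)) : ℕ) = p + (σ ⟨(i : ℕ) - p, by omega⟩ : ℕ) := by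
  induction i using Fin.addCases with
  | left i' => simp at h; omega
  | right j => rw [blockPerm_natAdd]; simp

lemma blockPerm_mul {p q : ℕ} (a b : Equiv.Perm (Fin p)) (c d : Equiv.Perm (Fin q)) :
    blockPerm (a * b) (c * d) = blockPerm a c * blockPerm b d := by
  apply Equiv.ext; intro x
  induction x using Fin.addCases with
  | left i => simp [Equiv.Perm.mul_apply, blockPerm_castAdd]
  | right j => simp [Equiv.Perm.mul_apply, blockPerm_natAdd]

lemma IsShuffle.strictMono_castAdd {m r : ℕ} {v : Equiv.Perm (Fin (m + r))}
    (hv : IsShuffle m v) : StrictMono fun i : Fin m => v (Fin.castAdd r i) := by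
  intro i j hij
  exact hv _ _ (by rw [Fin.lt_def]; simpa using Fin.lt_def.mp hij) (Or.inl (by simpa using j.isLt))

lemma IsShuffle.strictMono_natAdd {m r : ℕ} {v : Equiv.Perm (Fin (m + r))}
    (hv : IsShuffle m v) : StrictMono fun j : Fin r => v (Fin.natAdd m j) := by
  intro i j hij
  exact hv _ _ (by rw [Fin.lt_def]; simpa using Fin.lt_def.mp hij) (Or.inr (by simp))

lemma range_natAdd_eq_compl {m r : ℕ} (v : Equiv.Perm (Fin (m + r))) :
    Set.range (fun j : Fin r => v (Fin.natAdd m j))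
      = (Set.range (fun i : Fin m => v (Fin.castAdd r i)))ᶜ := by
  ext x
  simp only [Set.mem_range, Set.mem_compl_iff, not_exists]
  constructor
  · rintro ⟨j, rfl⟩ i hi
    have h1 := congrArg Fin.val (v.injective hi)
    simp at h1
    omega
  · intro hx
    obtain ⟨y, rfl⟩ := v.surjective x
    induction y using Fin.addCases with
    | left i => exact absurd rfl (hx i)
    | right j => exact ⟨j, rfl⟩

lemma shuffle_eq_of_range_eq {m r : ℕ} {v v' : Equiv.Perm (Fin (m + r))}
    (hv : IsShuffle m v) (hv' : IsShuffle m v')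
    (h : Set.range (fun i : Fin m => v (Fin.castAdd r i))
       = Set.range (fun i : Fin m => v' (Fin.castAdd r i))) : v = v' := by
  have h1 := strictMono_eq_of_range_eq hv.strictMono_castAdd hv'.strictMono_castAdd h
  have h2 := strictMono_eq_of_range_eq hv.strictMono_natAdd hv'.strictMono_natAdd
    (by rw [range_natAdd_eq_compl, range_natAdd_eq_compl, h])
  apply Equiv.ext; intro x
  induction x using Fin.addCases with
  | left i => exact congrFun h1 i
  | right j => exact congrFun h2 j

end Aux
def IsShuffle₃ (p q : ℕ) {n : ℕ} (w : Equiv.Perm (Fin n)) : Prop :=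
  ∀ a b : Fin n, a < b →
    ((b : ℕ) < p ∨ (p ≤ (a : ℕ) ∧ (b : ℕ) < p + q) ∨ p + q ≤ (a : ℕ)) → w a < w b

section Factor

open Equiv Finset

set_option maxHeartbeats 1000000 in
lemma exists_shuffle {m r : ℕ} (T : Finset (Fin (m + r))) (hT : T.card = m)
    (hTc : Tᶜ.card = r) :
    ∃ v : Equiv.Perm (Fin (m + r)), IsShuffle m v ∧
      (∀ i : Fin m, v (Fin.castAdd r i) = T.orderEmbOfFin hT i) ∧
      (∀ j : Fin r, v (Fin.natAdd m j) = Tᶜ.orderEmbOfFin hTc j) := by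
  classical
  set F : Fin (m + r) → Fin (m + r) :=
    Fin.addCases (fun i => T.orderEmbOfFin hT i) (fun j => Tᶜ.orderEmbOfFin hTc j) with hFdef
  have hFl : ∀ i : Fin m, F (Fin.castAdd r i) = T.orderEmbOfFin hT i := fun i => by
    simp [hFdef]
  have hFr : ∀ j : Fin r, F (Fin.natAdd m j) = Tᶜ.orderEmbOfFin hTc j := fun j => by
    simp [hFdef]
  clear_value F
  clear hFdef
  have hFinj : Function.Injective F := by
    intro x y hxy
    induction x using Fin.addCases with
    | left i =>
      induction y using Fin.addCases with
      | left i' =>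
        rw [hFl, hFl] at hxy
        exact congrArg _ ((T.orderEmbOfFin hT).injective hxy)
      | right j' =>
        rw [hFl, hFr] at hxy
        exact absurd (hxy ▸ T.orderEmbOfFin_mem hT i)
          (Finset.mem_compl.mp (Tᶜ.orderEmbOfFin_mem hTc j'))
    | right j =>
      induction y using Fin.addCases with
      | left i' =>
        rw [hFr, hFl] at hxy
        have hmem : T.orderEmbOfFin hT i' ∈ Tᶜ := hxy ▸ Tᶜ.orderEmbOfFin_mem hTc j
        exact absurd (T.orderEmbOfFin_mem hT i') (Finset.mem_compl.mp hmem)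
      | right j' =>
        rw [hFr, hFr] at hxy
        exact congrArg _ ((Tᶜ.orderEmbOfFin hTc).injective hxy)
  refine ⟨Equiv.ofBijective F (Finite.injective_iff_bijective.mp hFinj), ?_, hFl, hFr⟩
  intro a b hab hcond
  show F a < F b
  rcases hcond with hb | ha
  · have ha' : (a : ℕ) < m := lt_trans (Fin.lt_def.mp hab) hb
    have ea : a = Fin.castAdd r ⟨(a : ℕ), ha'⟩ := Fin.ext (by simp)
    have eb : b = Fin.castAdd r ⟨(b : ℕ), hb⟩ := Fin.ext (by simp)
    rw [ea, eb]
    simp only [hFl]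
    exact (T.orderEmbOfFin hT).strictMono (Fin.mk_lt_mk.mpr (Fin.lt_def.mp hab))
  · have hb' : m ≤ (b : ℕ) := le_trans ha (le_of_lt (Fin.lt_def.mp hab))
    have ea : a = Fin.natAdd m ⟨(a : ℕ) - m, by omega⟩ := Fin.ext (by simp; omega)
    have eb : b = Fin.natAdd m ⟨(b : ℕ) - m, by omega⟩ := Fin.ext (by simp; omega)
    rw [ea, eb]
    simp only [hFr]
    apply (Tᶜ.orderEmbOfFin hTc).strictMono
    have := Fin.lt_def.mp hab
    exact Fin.mk_lt_mk.mpr (by omega)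

lemma factor {m r : ℕ} (s : Equiv.Perm (Fin (m + r))) :
    ∃ (v : Equiv.Perm (Fin (m + r))) (a : Equiv.Perm (Fin m)) (b : Equiv.Perm (Fin r)),
      IsShuffle m v ∧ s = v * blockPerm a b := by
  classical
  set T : Finset (Fin (m + r)) :=
    Finset.image (fun i : Fin m => s (Fin.castAdd r i)) Finset.univ with hTdef
  have hcastinj : Function.Injective fun i : Fin m => s (Fin.castAdd r i) := by
    intro i j hij
    have := congrArg Fin.val (s.injective hij)
    simp at this
    exact Fin.ext this
  have hT : T.card = m := by
    rw [hTdef, Finset.card_image_of_injective _ hcastinj, Finset.card_univ, Fintype.card_fin]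
  have hTc : Tᶜ.card = r := by
    rw [Finset.card_compl, hT, Fintype.card_fin]
    omega
  have hmemT : ∀ i : Fin m, s (Fin.castAdd r i) ∈ T := fun i => by
    rw [hTdef]; exact Finset.mem_image_of_mem _ (Finset.mem_univ i)
  have hmemTc : ∀ j : Fin r, s (Fin.natAdd m j) ∈ Tᶜ := fun j => by
    rw [Finset.mem_compl, hTdef]
    intro hmem
    obtain ⟨i, _, hi⟩ := Finset.mem_image.mp hmem
    have := congrArg Fin.val (s.injective hi)
    simp at this
    omega
  clear_value T
  obtain ⟨v, hv, hvl, hvr⟩ := exists_shuffle T hT hTc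
  have hA : ∀ i : Fin m, ∃ i', v (Fin.castAdd r i') = s (Fin.castAdd r i) := by
    intro i
    have : s (Fin.castAdd r i) ∈ Set.range (T.orderEmbOfFin hT) := by
      rw [Finset.range_orderEmbOfFin]
      exact hmemT i
    obtain ⟨i', hi'⟩ := this
    exact ⟨i', by rw [hvl]; exact hi'⟩
  have hB : ∀ j : Fin r, ∃ j', v (Fin.natAdd m j') = s (Fin.natAdd m j) := by
    intro j
    have : s (Fin.natAdd m j) ∈ Set.range (Tᶜ.orderEmbOfFin hTc) := by
      rw [Finset.range_orderEmbOfFin]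
      exact hmemTc j
    obtain ⟨j', hj'⟩ := this
    exact ⟨j', by rw [hvr]; exact hj'⟩
  choose A hA using hA
  choose B hB using hB
  have hAinj : Function.Injective A := by
    intro i j hij
    have h1 : s (Fin.castAdd r i) = s (Fin.castAdd r j) := by rw [← hA, ← hA, hij]
    have := congrArg Fin.val (s.injective h1)
    simp at this
    exact Fin.ext this
  have hBinj : Function.Injective B := by
    intro i j hij
    have h1 : s (Fin.natAdd m i) = s (Fin.natAdd m j) := by rw [← hB, ← hB, hij]
    have := congrArg Fin.val (s.injective h1)
    simp at this
    exact Fin.ext this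
  refine ⟨v, Equiv.ofBijective A (Finite.injective_iff_bijective.mp hAinj),
    Equiv.ofBijective B (Finite.injective_iff_bijective.mp hBinj), hv, ?_⟩
  apply Equiv.ext
  intro x
  induction x using Fin.addCases with
  | left i =>
    rw [Equiv.Perm.mul_apply, blockPerm_castAdd]
    exact (hA i).symm
  | right j =>
    rw [Equiv.Perm.mul_apply, blockPerm_natAdd]
    exact (hB j).symm

end Factor
section Decomp

open Equiv Finset

lemma sh3_of_left {p q r : ℕ} {v : Equiv.Perm (Fin (p + q + r))} {w : Equiv.Perm (Fin (p + q))}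
    (hv : IsShuffle (p + q) v) (hw : IsShuffle p w) :
    IsShuffle₃ p q (v * blockPerm w (1 : Equiv.Perm (Fin r))) := by
  intro a b hab hcond
  set t := blockPerm w (1 : Equiv.Perm (Fin r)) with ht
  simp only [Equiv.Perm.mul_apply]
  have hab' := Fin.lt_def.mp hab
  rcases hcond with hb | ⟨ha, hb⟩ | ha
  · -- b < p
    have hbpq : (b : ℕ) < p + q := by omega
    have hapq : (a : ℕ) < p + q := by omega
    have hta : ((t a : Fin (p + q + r)) : ℕ) = (w ⟨(a : ℕ), hapq⟩ : ℕ) :=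
      blockPerm_val_lt w 1 a hapq
    have htb : ((t b : Fin (p + q + r)) : ℕ) = (w ⟨(b : ℕ), hbpq⟩ : ℕ) :=
      blockPerm_val_lt w 1 b hbpq
    have hww : w ⟨(a : ℕ), hapq⟩ < w ⟨(b : ℕ), hbpq⟩ :=
      hw _ _ (Fin.mk_lt_mk.mpr hab') (Or.inl hb)
    exact hv _ _ (Fin.lt_def.mpr (by rw [hta, htb]; exact Fin.lt_def.mp hww))
      (Or.inl (by rw [htb]; exact (w ⟨(b : ℕ), hbpq⟩).isLt))
  · -- p ≤ a and b < p + q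
    have hapq : (a : ℕ) < p + q := by omega
    have hta : ((t a : Fin (p + q + r)) : ℕ) = (w ⟨(a : ℕ), hapq⟩ : ℕ) :=
      blockPerm_val_lt w 1 a hapq
    have htb : ((t b : Fin (p + q + r)) : ℕ) = (w ⟨(b : ℕ), hb⟩ : ℕ) :=
      blockPerm_val_lt w 1 b hb
    have hww : w ⟨(a : ℕ), hapq⟩ < w ⟨(b : ℕ), hb⟩ :=
      hw _ _ (Fin.mk_lt_mk.mpr hab') (Or.inr ha)
    exact hv _ _ (Fin.lt_def.mpr (by rw [hta, htb]; exact Fin.lt_def.mp hww))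
      (Or.inl (by rw [htb]; exact (w ⟨(b : ℕ), hb⟩).isLt))
  · -- p + q ≤ a
    have hbpq : p + q ≤ (b : ℕ) := by omega
    have hta : t a = a := by
      apply Fin.ext
      rw [blockPerm_val_ge w 1 a ha]
      simp
      omega
    have htb : t b = b := by
      apply Fin.ext
      rw [blockPerm_val_ge w 1 b hbpq]
      simp
      omega
    rw [hta, htb]
    exact hv _ _ hab (Or.inr ha)

lemma sh3_of_right {p q r : ℕ} {v : Equiv.Perm (Fin (p + (q + r)))}
    {u : Equiv.Perm (Fin (q + r))}
    (hv : IsShuffle p v) (hu : IsShuffle q u) :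
    IsShuffle₃ p q (v * blockPerm (1 : Equiv.Perm (Fin p)) u) := by
  intro a b hab hcond
  set t := blockPerm (1 : Equiv.Perm (Fin p)) u with ht
  simp only [Equiv.Perm.mul_apply]
  have hab' := Fin.lt_def.mp hab
  have key : ∀ (hp : p ≤ (a : ℕ)),
      ((b : ℕ) - p < q ∨ q ≤ (a : ℕ) - p) → v (t a) < v (t b) := by
    intro hp hcond'
    have hpb : p ≤ (b : ℕ) := by omega
    have hta : ((t a : Fin (p + (q + r))) : ℕ) = p + (u ⟨(a : ℕ) - p, by omega⟩ : ℕ) :=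
      blockPerm_val_ge 1 u a hp
    have htb : ((t b : Fin (p + (q + r))) : ℕ) = p + (u ⟨(b : ℕ) - p, by omega⟩ : ℕ) :=
      blockPerm_val_ge 1 u b hpb
    have huu : u ⟨(a : ℕ) - p, by omega⟩ < u ⟨(b : ℕ) - p, by omega⟩ := by
      apply hu _ _ (Fin.mk_lt_mk.mpr (by omega))
      rcases hcond' with h | h
      · exact Or.inl h
      · exact Or.inr h
    have hltv : t a < t b := by
      rw [Fin.lt_def, hta, htb]
      have := Fin.lt_def.mp huu
      omega
    exact hv _ _ hltv (Or.inr (by rw [hta]; omega))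
  rcases hcond with hb | ⟨ha, hb⟩ | ha
  · -- b < p
    have hta : t a = a := by
      apply Fin.ext
      rw [blockPerm_val_lt 1 u a (by omega)]
      simp
    have htb : t b = b := by
      apply Fin.ext
      rw [blockPerm_val_lt 1 u b hb]
      simp
    rw [hta, htb]
    exact hv _ _ hab (Or.inl hb)
  · exact key ha (Or.inl (by omega))
  · exact key (by omega) (Or.inr (by omega))

lemma exists_left {p q r : ℕ} (s : Equiv.Perm (Fin (p + q + r))) (hs : IsShuffle₃ p q s) :
    ∃ (v : Equiv.Perm (Fin (p + q + r))) (w : Equiv.Perm (Fin (p + q))),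
      IsShuffle (p + q) v ∧ IsShuffle p w ∧ s = v * blockPerm w (1 : Equiv.Perm (Fin r)) := by
  obtain ⟨v, a, b, hv, hfac⟩ := factor (m := p + q) (r := r) s
  have hsc : ∀ i : Fin (p + q), s (Fin.castAdd r i) = v (Fin.castAdd r (a i)) := by
    intro i
    rw [hfac]
    simp only [Equiv.Perm.mul_apply, blockPerm_castAdd]
  have hsn : ∀ j : Fin r, s (Fin.natAdd (p + q) j) = v (Fin.natAdd (p + q) (b j)) := by
    intro j
    rw [hfac]
    simp only [Equiv.Perm.mul_apply, blockPerm_natAdd]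
  have hb1 : b = 1 := by
    apply perm_eq_one_of_strictMono
    intro j j' hjj'
    have h1 : v (Fin.natAdd (p + q) (b j)) < v (Fin.natAdd (p + q) (b j')) := by
      rw [← hsn, ← hsn]
      exact hs _ _ (Fin.lt_def.mpr (by simpa using Fin.lt_def.mp hjj'))
        (Or.inr (Or.inr (by simp)))
    exact hv.strictMono_natAdd.lt_iff_lt.mp h1
  have ha : IsShuffle p a := by
    intro i i' hii' hcond
    have h1 : s (Fin.castAdd r i) < s (Fin.castAdd r i') := by
      apply hs _ _ (Fin.lt_def.mpr (by simpa using Fin.lt_def.mp hii'))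
      rcases hcond with h | h
      · exact Or.inl (by simpa using h)
      · exact Or.inr (Or.inl ⟨by simpa using h, by simpa using i'.isLt⟩)
    rw [hsc, hsc] at h1
    exact hv.strictMono_castAdd.lt_iff_lt.mp h1
  exact ⟨v, a, hv, ha, by rw [hfac, hb1]⟩

lemma exists_right {p q r : ℕ} (s : Equiv.Perm (Fin (p + (q + r)))) (hs : IsShuffle₃ p q s) :
    ∃ (v : Equiv.Perm (Fin (p + (q + r)))) (u : Equiv.Perm (Fin (q + r))),
      IsShuffle p v ∧ IsShuffle q u ∧ s = v * blockPerm (1 : Equiv.Perm (Fin p)) u := by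
  obtain ⟨v, a, b, hv, hfac⟩ := factor (m := p) (r := q + r) s
  have hsc : ∀ i : Fin p, s (Fin.castAdd (q + r) i) = v (Fin.castAdd (q + r) (a i)) := by
    intro i
    rw [hfac]
    simp only [Equiv.Perm.mul_apply, blockPerm_castAdd]
  have hsn : ∀ j : Fin (q + r), s (Fin.natAdd p j) = v (Fin.natAdd p (b j)) := by
    intro j
    rw [hfac]
    simp only [Equiv.Perm.mul_apply, blockPerm_natAdd]
  have ha1 : a = 1 := by
    apply perm_eq_one_of_strictMono
    intro i i' hii'
    have h1 : v (Fin.castAdd (q + r) (a i)) < v (Fin.castAdd (q + r) (a i')) := by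
      rw [← hsc, ← hsc]
      exact hs _ _ (Fin.lt_def.mpr (by simpa using Fin.lt_def.mp hii'))
        (Or.inl (by simpa using i'.isLt))
    exact hv.strictMono_castAdd.lt_iff_lt.mp h1
  have hb : IsShuffle q b := by
    intro j j' hjj' hcond
    have h1 : s (Fin.natAdd p j) < s (Fin.natAdd p j') := by
      apply hs _ _ (Fin.lt_def.mpr (by simpa using Fin.lt_def.mp hjj'))
      rcases hcond with h | h
      · exact Or.inr (Or.inl ⟨by simp, by simpa using h⟩)
      · exact Or.inr (Or.inr (by simpa using h))
    rw [hsn, hsn] at h1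
    exact hv.strictMono_natAdd.lt_iff_lt.mp h1
  exact ⟨v, b, hv, hb, by rw [hfac, ha1]⟩

lemma range_comp_perm {m r : ℕ} (v : Equiv.Perm (Fin (m + r))) (a : Equiv.Perm (Fin m)) :
    Set.range (fun i : Fin m => v (Fin.castAdd r (a i)))
      = Set.range (fun i : Fin m => v (Fin.castAdd r i)) := by
  ext x
  constructor
  · rintro ⟨i, rfl⟩; exact ⟨a i, rfl⟩
  · rintro ⟨i, rfl⟩; exact ⟨a.symm i, by simp⟩

lemma inj_factor {m r : ℕ} {v v' : Equiv.Perm (Fin (m + r))}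
    {a a' : Equiv.Perm (Fin m)} {b b' : Equiv.Perm (Fin r)}
    (hv : IsShuffle m v) (hv' : IsShuffle m v')
    (h : v * blockPerm a b = v' * blockPerm a' b') : v = v' ∧ a = a' ∧ b = b' := by
  have hpt : ∀ x, v (blockPerm a b x) = v' (blockPerm a' b' x) := by
    intro x
    have := congrArg (fun e : Equiv.Perm _ => e x) h
    simpa [Equiv.Perm.mul_apply] using this
  have hvv : v = v' := by
    apply shuffle_eq_of_range_eq hv hv'
    rw [← range_comp_perm v a, ← range_comp_perm v' a']
    have hfun : (fun i : Fin m => v (Fin.castAdd r (a i)))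
        = fun i => v' (Fin.castAdd r (a' i)) := by
      funext i
      have := hpt (Fin.castAdd r i)
      rwa [blockPerm_castAdd, blockPerm_castAdd] at this
    rw [hfun]
  subst hvv
  have hbb : blockPerm a b = blockPerm a' b' := mul_left_cancel h
  refine ⟨rfl, ?_, ?_⟩
  · apply Equiv.ext; intro i
    have := congrArg (fun e : Equiv.Perm _ => e (Fin.castAdd r i)) hbb
    simp only [blockPerm_castAdd] at this
    exact Fin.ext (by simpa using congrArg Fin.val this)
  · apply Equiv.ext; intro j
    have := congrArg (fun e : Equiv.Perm _ => e (Fin.natAdd m j)) hbb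
    simp only [blockPerm_natAdd] at this
    exact Fin.ext (by simpa using congrArg Fin.val this)

end Decomp
section Cast

open Equiv Finset

lemma permCongr_mul {α β : Type*} (e : α ≃ β) (x y : Equiv.Perm α) :
    e.permCongr (x * y) = e.permCongr x * e.permCongr y := by
  apply Equiv.ext; intro b
  simp [Equiv.permCongr_apply, Equiv.Perm.mul_apply]

lemma permCongr_finCongr_refl {n : ℕ} (π : Equiv.Perm (Fin n)) :
    (finCongr (rfl : n = n)).permCongr π = π := by
  apply Equiv.ext; intro x
  simp [Equiv.permCongr_apply]

lemma finCongr_permCongr_val {n n' : ℕ} (h : n = n') (π : Equiv.Perm (Fin n)) (x : Fin n') :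
    (((finCongr h).permCongr π) x : ℕ) = (π ⟨(x : ℕ), by omega⟩ : ℕ) := by
  subst h
  rw [permCongr_finCongr_refl]

lemma isShuffle₃_permCongr {n n' p q : ℕ} (h : n = n') {s : Equiv.Perm (Fin n)}
    (hs : IsShuffle₃ p q s) : IsShuffle₃ p q ((finCongr h).permCongr s) := by
  subst h
  rwa [permCongr_finCongr_refl]

lemma blockPerm_assoc {p q r : ℕ} (ρ : Equiv.Perm (Fin p)) (σ : Equiv.Perm (Fin q))
    (τ : Equiv.Perm (Fin r)) :
    (finCongr (Nat.add_assoc p q r).symm).permCongr (blockPerm ρ (blockPerm σ τ))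
      = blockPerm (blockPerm ρ σ) τ := by
  apply Equiv.ext; intro x
  apply Fin.ext
  rw [finCongr_permCongr_val]
  set y : Fin (p + (q + r)) := ⟨(x : ℕ), by omega⟩ with hy
  have hyv : (y : ℕ) = (x : ℕ) := rfl
  by_cases h1 : (x : ℕ) < p + q
  · rw [blockPerm_val_lt (blockPerm ρ σ) τ x h1]
    by_cases h2 : (x : ℕ) < p
    · rw [blockPerm_val_lt ρ (blockPerm σ τ) y h2, blockPerm_val_lt ρ σ _ h2]
    · rw [blockPerm_val_ge ρ (blockPerm σ τ) y (by omega),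
        blockPerm_val_ge ρ σ _ (by omega),
        blockPerm_val_lt σ τ _ (by simp; omega)]
  · rw [blockPerm_val_ge (blockPerm ρ σ) τ x (by omega),
      blockPerm_val_ge ρ (blockPerm σ τ) y (by omega),
      blockPerm_val_ge σ τ _ (by simp; omega)]
    have harg : (⟨((⟨(y : ℕ) - p, by omega⟩ : Fin (q + r)) : ℕ) - q, by omega⟩ : Fin r)
        = ⟨(x : ℕ) - (p + q), by omega⟩ := Fin.ext (by simp; omega)
    rw [harg]
    omega

end Cast
/-- Basis of `k[S^∞]`: permutations of all finite orders. -/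
abbrev PermSigma : Type := Σ n : ℕ, Equiv.Perm (Fin n)

/-- The graded vector space `k[S^∞] = ⊕_{n ≥ 0} k[S_n]`. -/
abbrev MR (k : Type*) [Field k] : Type _ := PermSigma →₀ k

/-- The Malvenuto-Reutenauer product on basis elements:
`ρ ∗ σ = Σ_{w ∈ Sh(p,q)} w ∘ (ρ × σ)`. -/
noncomputable def mrBasisMul (k : Type*) [Field k] (x y : PermSigma) : MR k :=
  ∑ w ∈ Finset.univ.filter
      (fun w : Equiv.Perm (Fin (x.1 + y.1)) => IsShuffle x.1 w),
    Finsupp.single ⟨x.1 + y.1, w * blockPerm x.2 y.2⟩ (1 : k)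

/-- The Malvenuto-Reutenauer product, extended bilinearly to `k[S^∞]`. -/
noncomputable def mrMul (k : Type*) [Field k] (f g : MR k) : MR k :=
  f.sum fun x a => g.sum fun y b => (a * b) • mrBasisMul k x y

section AlgAux

open Equiv Finset

lemma single_cast (k : Type*) [Field k] {n n' : ℕ} (h : n = n') (π : Equiv.Perm (Fin n)) (c : k) :
    (Finsupp.single (⟨n, π⟩ : PermSigma) c : MR k)
      = Finsupp.single (⟨n', (finCongr h).permCongr π⟩ : PermSigma) c := by
  subst h
  rw [permCongr_finCongr_refl]

lemma isShuffle_one {p n : ℕ} : IsShuffle p (1 : Equiv.Perm (Fin n)) :=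
  fun a b hab _ => by simpa using hab

variable (k : Type*) [Field k]

lemma left_eq (p q r : ℕ) (ρ : Equiv.Perm (Fin p)) (σ : Equiv.Perm (Fin q))
    (τ : Equiv.Perm (Fin r)) :
    (∑ w ∈ Finset.univ.filter (fun w : Equiv.Perm (Fin (p + q)) => IsShuffle p w),
      ∑ v ∈ Finset.univ.filter (fun v : Equiv.Perm (Fin (p + q + r)) => IsShuffle (p + q) v),
        Finsupp.single (⟨p + q + r, v * blockPerm (w * blockPerm ρ σ) τ⟩ : PermSigma) (1 : k))
    = ∑ s ∈ Finset.univ.filter (fun s : Equiv.Perm (Fin (p + q + r)) => IsShuffle₃ p q s),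
        Finsupp.single (⟨p + q + r, s * blockPerm (blockPerm ρ σ) τ⟩ : PermSigma) (1 : k) := by
  rw [← Finset.sum_product']
  apply Finset.sum_bij (fun a _ => a.2 * blockPerm a.1 (1 : Equiv.Perm (Fin r)))
  · intro a ha
    rw [Finset.mem_product] at ha
    exact Finset.mem_filter.mpr ⟨Finset.mem_univ _,
      sh3_of_left (Finset.mem_filter.mp ha.2).2 (Finset.mem_filter.mp ha.1).2⟩
  · intro a ha a' ha' heq
    rw [Finset.mem_product] at ha ha'
    obtain ⟨h1, h2, _⟩ := inj_factor (Finset.mem_filter.mp ha.2).2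
      (Finset.mem_filter.mp ha'.2).2 heq
    exact Prod.ext h2 h1
  · intro s hs
    obtain ⟨v, w, hv, hw, hfac⟩ := exists_left s (Finset.mem_filter.mp hs).2
    exact ⟨(w, v), Finset.mem_product.mpr ⟨Finset.mem_filter.mpr ⟨Finset.mem_univ _, hw⟩,
      Finset.mem_filter.mpr ⟨Finset.mem_univ _, hv⟩⟩, hfac.symm⟩
  · intro a ha
    have hkey : a.2 * blockPerm (a.1 * blockPerm ρ σ) τ
        = a.2 * blockPerm a.1 (1 : Equiv.Perm (Fin r)) * blockPerm (blockPerm ρ σ) τ := by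
      rw [mul_assoc, ← blockPerm_mul, one_mul]
    rw [hkey]

lemma right_eq (p q r : ℕ) (ρ : Equiv.Perm (Fin p)) (σ : Equiv.Perm (Fin q))
    (τ : Equiv.Perm (Fin r)) :
    (∑ u ∈ Finset.univ.filter (fun u : Equiv.Perm (Fin (q + r)) => IsShuffle q u),
      ∑ v ∈ Finset.univ.filter (fun v : Equiv.Perm (Fin (p + (q + r))) => IsShuffle p v),
        Finsupp.single (⟨p + (q + r), v * blockPerm ρ (u * blockPerm σ τ)⟩ : PermSigma) (1 : k))
    = ∑ s ∈ Finset.univ.filter (fun s : Equiv.Perm (Fin (p + (q + r))) => IsShuffle₃ p q s),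
        Finsupp.single (⟨p + (q + r), s * blockPerm ρ (blockPerm σ τ)⟩ : PermSigma) (1 : k) := by
  rw [← Finset.sum_product']
  apply Finset.sum_bij (fun a _ => a.2 * blockPerm (1 : Equiv.Perm (Fin p)) a.1)
  · intro a ha
    rw [Finset.mem_product] at ha
    exact Finset.mem_filter.mpr ⟨Finset.mem_univ _,
      sh3_of_right (Finset.mem_filter.mp ha.2).2 (Finset.mem_filter.mp ha.1).2⟩
  · intro a ha a' ha' heq
    rw [Finset.mem_product] at ha ha'
    obtain ⟨h1, _, h3⟩ := inj_factor (Finset.mem_filter.mp ha.2).2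
      (Finset.mem_filter.mp ha'.2).2 heq
    exact Prod.ext h3 h1
  · intro s hs
    obtain ⟨v, u, hv, hu, hfac⟩ := exists_right s (Finset.mem_filter.mp hs).2
    exact ⟨(u, v), Finset.mem_product.mpr ⟨Finset.mem_filter.mpr ⟨Finset.mem_univ _, hu⟩,
      Finset.mem_filter.mpr ⟨Finset.mem_univ _, hv⟩⟩, hfac.symm⟩
  · intro a ha
    have hkey : a.2 * blockPerm ρ (a.1 * blockPerm σ τ)
        = a.2 * blockPerm (1 : Equiv.Perm (Fin p)) a.1 * blockPerm ρ (blockPerm σ τ) := by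
      rw [mul_assoc, ← blockPerm_mul, one_mul]
    rw [hkey]

lemma permCongr_cancel {n n' : ℕ} (h : n = n') (π : Equiv.Perm (Fin n')) :
    (finCongr h).permCongr ((finCongr h.symm).permCongr π) = π := by
  subst h
  rw [permCongr_finCongr_refl, permCongr_finCongr_refl]

lemma castSum_eq (p q r : ℕ) (ρ : Equiv.Perm (Fin p)) (σ : Equiv.Perm (Fin q))
    (τ : Equiv.Perm (Fin r)) :
    (∑ s ∈ Finset.univ.filter (fun s : Equiv.Perm (Fin (p + (q + r))) => IsShuffle₃ p q s),
        Finsupp.single (⟨p + (q + r), s * blockPerm ρ (blockPerm σ τ)⟩ : PermSigma) (1 : k))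
    = ∑ s ∈ Finset.univ.filter (fun s : Equiv.Perm (Fin (p + q + r)) => IsShuffle₃ p q s),
        Finsupp.single (⟨p + q + r, s * blockPerm (blockPerm ρ σ) τ⟩ : PermSigma) (1 : k) := by
  apply Finset.sum_bij
    (fun s' _ => (finCongr (Nat.add_assoc p q r).symm).permCongr s')
  · intro a ha
    exact Finset.mem_filter.mpr ⟨Finset.mem_univ _,
      isShuffle₃_permCongr _ (Finset.mem_filter.mp ha).2⟩
  · intro a _ a' _ heq
    exact ((finCongr (Nat.add_assoc p q r).symm).permCongr).injective heq
  · intro s hs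
    refine ⟨(finCongr (Nat.add_assoc p q r)).permCongr s,
      Finset.mem_filter.mpr ⟨Finset.mem_univ _,
        isShuffle₃_permCongr _ (Finset.mem_filter.mp hs).2⟩, ?_⟩
    exact permCongr_cancel (Nat.add_assoc p q r).symm s
  · intro a ha
    rw [single_cast k (Nat.add_assoc p q r).symm]
    have hkey : (finCongr (Nat.add_assoc p q r).symm).permCongr
          (a * blockPerm ρ (blockPerm σ τ))
        = (finCongr (Nat.add_assoc p q r).symm).permCongr a
            * blockPerm (blockPerm ρ σ) τ := by
      rw [_root_.permCongr_mul, blockPerm_assoc]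
    rw [hkey]

end AlgAux
section Final

open Equiv Finset

variable (k : Type*) [Field k]

noncomputable def mrMulL : MR k →ₗ[k] MR k →ₗ[k] MR k :=
  Finsupp.lsum k fun x => LinearMap.toSpanSingleton k (MR k →ₗ[k] MR k)
    (Finsupp.lsum k fun y => LinearMap.toSpanSingleton k (MR k) (mrBasisMul k x y))

lemma mrMul_eq (f g : MR k) : mrMul k f g = mrMulL k f g := by
  rw [mrMul, mrMulL, Finsupp.lsum_apply, Finsupp.sum, Finsupp.sum, LinearMap.sum_apply]
  apply Finset.sum_congr rfl
  intro x _
  rw [LinearMap.toSpanSingleton_apply, LinearMap.smul_apply, Finsupp.lsum_apply,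
    Finsupp.smul_sum]
  apply Finset.sum_congr rfl
  intro y _
  simp only [LinearMap.toSpanSingleton_apply, smul_smul]

lemma mrMulL_single_single (x y : PermSigma) :
    mrMulL k (Finsupp.single x 1) (Finsupp.single y 1) = mrBasisMul k x y := by
  rw [mrMulL, Finsupp.lsum_single, LinearMap.toSpanSingleton_apply, one_smul,
    Finsupp.lsum_single, LinearMap.toSpanSingleton_apply, one_smul]

lemma single_eq_smul (y : PermSigma) (c : k) :
    (Finsupp.single y c : MR k) = c • Finsupp.single y 1 := by
  rw [Finsupp.smul_single, smul_eq_mul, mul_one]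

lemma core (p q r : ℕ) (ρ : Equiv.Perm (Fin p)) (σ : Equiv.Perm (Fin q))
    (τ : Equiv.Perm (Fin r)) :
    mrMulL k (mrBasisMul k ⟨p, ρ⟩ ⟨q, σ⟩) (Finsupp.single ⟨r, τ⟩ 1)
      = mrMulL k (Finsupp.single ⟨p, ρ⟩ 1) (mrBasisMul k ⟨q, σ⟩ ⟨r, τ⟩) := by
  have hL : mrMulL k (mrBasisMul k ⟨p, ρ⟩ ⟨q, σ⟩) (Finsupp.single ⟨r, τ⟩ 1)
      = ∑ w ∈ Finset.univ.filter (fun w : Equiv.Perm (Fin (p + q)) => IsShuffle p w),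
          mrBasisMul k ⟨p + q, w * blockPerm ρ σ⟩ ⟨r, τ⟩ := by
    rw [mrBasisMul, map_sum, LinearMap.sum_apply]
    apply Finset.sum_congr rfl
    intro w _
    exact mrMulL_single_single k _ _
  have hR : mrMulL k (Finsupp.single ⟨p, ρ⟩ 1) (mrBasisMul k ⟨q, σ⟩ ⟨r, τ⟩)
      = ∑ u ∈ Finset.univ.filter (fun u : Equiv.Perm (Fin (q + r)) => IsShuffle q u),
          mrBasisMul k ⟨p, ρ⟩ ⟨q + r, u * blockPerm σ τ⟩ := by
    rw [mrBasisMul, map_sum]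
    apply Finset.sum_congr rfl
    intro u _
    exact mrMulL_single_single k _ _
  rw [hL, hR]
  have hLexp : ∀ w : Equiv.Perm (Fin (p + q)),
      mrBasisMul k ⟨p + q, w * blockPerm ρ σ⟩ ⟨r, τ⟩
        = ∑ v ∈ Finset.univ.filter
            (fun v : Equiv.Perm (Fin (p + q + r)) => IsShuffle (p + q) v),
            Finsupp.single (⟨p + q + r, v * blockPerm (w * blockPerm ρ σ) τ⟩ : PermSigma)
              (1 : k) := fun w => rfl
  have hRexp : ∀ u : Equiv.Perm (Fin (q + r)),
      mrBasisMul k ⟨p, ρ⟩ ⟨q + r, u * blockPerm σ τ⟩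
        = ∑ v ∈ Finset.univ.filter
            (fun v : Equiv.Perm (Fin (p + (q + r))) => IsShuffle p v),
            Finsupp.single (⟨p + (q + r), v * blockPerm ρ (u * blockPerm σ τ)⟩ : PermSigma)
              (1 : k) := fun u => rfl
  simp only [hLexp, hRexp]
  rw [left_eq, right_eq, castSum_eq]

lemma filter_isShuffle_zero (n : ℕ) :
    (Finset.univ.filter fun w : Equiv.Perm (Fin (0 + n)) => IsShuffle 0 w)
      = {(1 : Equiv.Perm (Fin (0 + n)))} := by
  ext w
  simp only [Finset.mem_filter, Finset.mem_univ, true_and, Finset.mem_singleton]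
  constructor
  · intro h
    exact perm_eq_one_of_strictMono w fun a b hab => h a b hab (Or.inr (Nat.zero_le _))
  · rintro rfl
    exact isShuffle_one

lemma filter_isShuffle_full (n : ℕ) :
    (Finset.univ.filter fun w : Equiv.Perm (Fin (n + 0)) => IsShuffle n w)
      = {(1 : Equiv.Perm (Fin (n + 0)))} := by
  ext w
  simp only [Finset.mem_filter, Finset.mem_univ, true_and, Finset.mem_singleton]
  constructor
  · intro h
    exact perm_eq_one_of_strictMono w fun a b hab =>
      h a b hab (Or.inl (by have := b.isLt; omega))
  · rintro rfl
    exact isShuffle_one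

lemma single_zero_add (n : ℕ) (π : Equiv.Perm (Fin n)) (c : k) :
    (Finsupp.single (⟨0 + n, blockPerm (1 : Equiv.Perm (Fin 0)) π⟩ : PermSigma) c : MR k)
      = Finsupp.single (⟨n, π⟩ : PermSigma) c := by
  rw [single_cast k (Nat.zero_add n)]
  have he : (finCongr (Nat.zero_add n)).permCongr (blockPerm (1 : Equiv.Perm (Fin 0)) π)
      = π := by
    apply Equiv.ext; intro x
    apply Fin.ext
    rw [finCongr_permCongr_val, blockPerm_val_ge 1 π _ (Nat.zero_le _)]
    simp
  rw [he]

lemma blockPerm_one_right (n : ℕ) (π : Equiv.Perm (Fin n)) :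
    blockPerm π (1 : Equiv.Perm (Fin 0)) = π := by
  apply Equiv.ext; intro x
  apply Fin.ext
  rw [blockPerm_val_lt π 1 x x.isLt]
  rfl

lemma mrBasisMul_one_left (n : ℕ) (π : Equiv.Perm (Fin n)) :
    mrBasisMul k ⟨0, 1⟩ ⟨n, π⟩ = Finsupp.single (⟨n, π⟩ : PermSigma) (1 : k) := by
  rw [mrBasisMul]
  rw [filter_isShuffle_zero, Finset.sum_singleton, one_mul]
  exact single_zero_add k n π 1

lemma mrBasisMul_one_right (n : ℕ) (π : Equiv.Perm (Fin n)) :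
    mrBasisMul k ⟨n, π⟩ ⟨0, 1⟩ = Finsupp.single (⟨n, π⟩ : PermSigma) (1 : k) := by
  rw [mrBasisMul]
  rw [filter_isShuffle_full, Finset.sum_singleton, one_mul, blockPerm_one_right]
  rfl

end Final
/-- the Malvenuto-Reutenauer product on `k[S^∞]` is associative and the
empty permutation (the unique element of `S_0`) is a two-sided unit for it. -/
theorem mrMul_assoc_and_unit (k : Type*) [Field k] [CharZero k] :
    (∀ f g h : MR k, mrMul k (mrMul k f g) h = mrMul k f (mrMul k g h)) ∧
    (∀ f : MR k,
      mrMul k (Finsupp.single ⟨0, (1 : Equiv.Perm (Fin 0))⟩ (1 : k)) f = f ∧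
      mrMul k f (Finsupp.single ⟨0, (1 : Equiv.Perm (Fin 0))⟩ (1 : k)) = f) := by
  have hcore : ∀ x y z : PermSigma,
      mrMulL k (mrMulL k (Finsupp.single x 1) (Finsupp.single y 1)) (Finsupp.single z 1)
        = mrMulL k (Finsupp.single x 1)
            (mrMulL k (Finsupp.single y 1) (Finsupp.single z 1)) := by
    rintro ⟨p, ρ⟩ ⟨q, σ⟩ ⟨r, τ⟩
    rw [mrMulL_single_single, mrMulL_single_single]
    exact core k p q r ρ σ τ
  constructor
  · intro f g h
    rw [mrMul_eq, mrMul_eq, mrMul_eq, mrMul_eq]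
    induction f using Finsupp.induction_linear with
    | zero => simp
    | add f1 f2 hf1 hf2 => simp only [map_add, LinearMap.add_apply, hf1, hf2]
    | single x a =>
      induction g using Finsupp.induction_linear with
      | zero => simp
      | add g1 g2 hg1 hg2 => simp only [map_add, LinearMap.add_apply, hg1, hg2]
      | single y b =>
        induction h using Finsupp.induction_linear with
        | zero => simp
        | add h1 h2 hh1 hh2 => simp only [map_add, hh1, hh2]
        | single z c =>
          rw [single_eq_smul k x a, single_eq_smul k y b, single_eq_smul k z c]
          simp only [map_smul, LinearMap.smul_apply, smul_smul, mul_assoc]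
          rw [hcore]
  · intro f
    constructor
    · rw [mrMul_eq]
      induction f using Finsupp.induction_linear with
      | zero => simp
      | add f1 f2 h1 h2 => simp only [map_add, h1, h2]
      | single y c =>
        obtain ⟨n, π⟩ := y
        rw [single_eq_smul k _ c, map_smul, mrMulL_single_single, mrBasisMul_one_left,
          ← single_eq_smul]
    · rw [mrMul_eq]
      induction f using Finsupp.induction_linear with
      | zero => simp
      | add f1 f2 h1 h2 => simp only [map_add, LinearMap.add_apply, h1, h2]
      | single y c =>
        obtain ⟨n, π⟩ := y
        rw [single_eq_smul k _ c, map_smul, LinearMap.smul_apply, mrMulL_single_single,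
          mrBasisMul_one_right, ← single_eq_smul]
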